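/- Fix w ≥ 1. Given integers r ≥ 0, w ≥ j ≥ 0, there is a unique representation w - j = n(n+r) + cn + d with n ≥ 0, c ∈ {0,1}, and 0 ≤ d ≤ n - 1 + c(r+1). -/

import Mathlib

lemma stmt_12_ex (r : ℤ) (hr : 0 ≤ r) :
    ∀ m : ℤ, 0 ≤ m → ∃ n c d : ℤ, 0 ≤ n ∧ (c = 0 ∨ c = 1) ∧ 0 ≤ d ∧
      d ≤ n - 1 + c * (r + 1) ∧ m = n * (n + r) + c * n + d := by
  intro m hm
  refine Int.le_induction (motive := fun x _ => ∃ n c d : ℤ, 0 ≤ n ∧ (c = 0 ∨ c = 1) ∧ 0 ≤ d ∧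
      d ≤ n - 1 + c * (r + 1) ∧ x = n * (n + r) + c * n + d) ?_ ?_ m hm
  · exact ⟨0, 1, 0, le_refl 0, Or.inr rfl, le_refl 0, by linarith, by ring⟩
  · rintro k hk ⟨n, c, d, hn, hc, hd0, hd1, heq⟩
    by_cases hlt : d < n - 1 + c * (r + 1)
    · exact ⟨n, c, d + 1, hn, hc, by linarith, by linarith, by linarith⟩
    · have hd : d = n - 1 + c * (r + 1) := le_antisymm hd1 (not_lt.mp hlt)
      rcases hc with h0 | h1
      · subst h0; subst hd
        refine ⟨n, 1, 0, hn, Or.inr rfl, le_refl 0, by linarith, ?_⟩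
        linear_combination heq
      · subst h1; subst hd
        refine ⟨n + 1, 0, 0, by linarith, Or.inl rfl, le_refl 0, by linarith, ?_⟩
        linear_combination heq

lemma stmt_12_uniq (r : ℤ) (hr : 0 ≤ r) (m n c d n' c' d' : ℤ)
    (hn : 0 ≤ n) (hc : c = 0 ∨ c = 1) (hd0 : 0 ≤ d) (hd1 : d ≤ n - 1 + c * (r + 1))
    (heq : m = n * (n + r) + c * n + d)
    (hn' : 0 ≤ n') (hc' : c' = 0 ∨ c' = 1) (hd0' : 0 ≤ d') (hd1' : d' ≤ n' - 1 + c' * (r + 1))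
    (heq' : m = n' * (n' + r) + c' * n' + d') :
    n = n' ∧ c = c' ∧ d = d' := by
  have hnn : n = n' := by
    rcases lt_trichotomy n n' with h | h | h
    · exfalso
      have h1 : n + 1 ≤ n' := h
      have key : (0:ℤ) ≤ (n' - (n + 1)) * (n' + n + 1 + r) :=
        mul_nonneg (by linarith) (by linarith)
      have hcle : c ≤ 1 := by rcases hc with h | h <;> simp [h]
      have hc0 : 0 ≤ c := by rcases hc with h | h <;> simp [h]
      have hc0' : 0 ≤ c' := by rcases hc' with h | h <;> simp [h]
      -- m ≤ n(n+r) + 2n + r  and  m ≥ n'(n'+r)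
      nlinarith [mul_nonneg hc0' hn', mul_le_mul_of_nonneg_right hcle hn]
    · exact h
    · exfalso
      have h1 : n' + 1 ≤ n := h
      have key : (0:ℤ) ≤ (n - (n' + 1)) * (n + n' + 1 + r) :=
        mul_nonneg (by linarith) (by linarith)
      have hcle : c' ≤ 1 := by rcases hc' with h | h <;> simp [h]
      have hc0 : 0 ≤ c' := by rcases hc' with h | h <;> simp [h]
      have hc0' : 0 ≤ c := by rcases hc with h | h <;> simp [h]
      nlinarith [mul_nonneg hc0' hn, mul_le_mul_of_nonneg_right hcle hn']
  subst hnn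
  have hcd : c * n + d = c' * n + d' := by linarith
  rcases hc with h0 | h1 <;> rcases hc' with h0' | h1' <;> subst_vars <;>
    exact ⟨rfl, by linarith, by linarith⟩

/-- Given integers `r ≥ 0` and `w ≥ j ≥ 0` (with `w ≥ 1`), there is a unique
representation `w - j = n(n+r) + cn + d` with `n ≥ 0`, `c ∈ {0,1}` and
`0 ≤ d ≤ n - 1 + c(r+1)`. -/
theorem stmt_12 (r w j : ℤ) (hr : 0 ≤ r) (hw1 : 1 ≤ w) (hj : 0 ≤ j) (hjw : j ≤ w) :
    ∃! p : ℤ × ℤ × ℤ,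
      0 ≤ p.1 ∧ (p.2.1 = 0 ∨ p.2.1 = 1) ∧
      0 ≤ p.2.2 ∧ p.2.2 ≤ p.1 - 1 + p.2.1 * (r + 1) ∧
      w - j = p.1 * (p.1 + r) + p.2.1 * p.1 + p.2.2 := by
  obtain ⟨n, c, d, hn, hc, hd0, hd1, heq⟩ := stmt_12_ex r hr (w - j) (by linarith)
  refine ⟨(n, c, d), ⟨hn, hc, hd0, hd1, heq⟩, ?_⟩
  rintro ⟨n', c', d'⟩ ⟨hn', hc', hd0', hd1', heq'⟩
  obtain ⟨h1, h2, h3⟩ := stmt_12_uniq r hr (w - j) n' c' d' n c d hn' hc' hd0' hd1' heq'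
    hn hc hd0 hd1 heq
  simp [h1, h2, h3]
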